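/- arXiv:2109.13335 — 5 statements merged into one kernel-verified Lean document; each statement's English description precedes it below -/
import Mathlib

section
/- The broken 2×2 matrix product has bilinear rank at most 6: there exist integer coefficient arrays u, v : Fin 6 → (Fin 2 × Fin 2) → ℤ and w : (Fin 2 × Fin 2) → Fin 6 → ℤ such that for every commutative ring R and all 2×2 matrices A, B over R, defining P_k = (Σ_{p,q} u k (p,q) • A_{pq}) * (Σ_{p,q} v k (p,q) • B_{pq}) for k ∈ Fin 6, the matrix C given by C_{ij} = Σ_{k} w (i,j) k • P_k satisfies C_{11} = A_{12} B_{21}, C_{12} = A_{11} B_{12} + A_{12} B_{22}, C_{21} = A_{21} B_{11} + A_{22} B_{21}, and C_{22} = A_{21} B_{12} + A_{22} B_{22}. -/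
/-- The broken 2×2 matrix product (omitting the summand `A 0 0 * B 0 0` from `C 0 0`)
has bilinear rank at most 6. -/
theorem broken_two_by_two_rank_le_six :
    ∃ (u v : Fin 6 → (Fin 2 × Fin 2) → ℤ) (w : (Fin 2 × Fin 2) → Fin 6 → ℤ),
      ∀ (R : Type) [CommRing R] (A B : Matrix (Fin 2) (Fin 2) R),
        let P : Fin 6 → R := fun k =>
          (∑ p : Fin 2, ∑ q : Fin 2, u k (p, q) • A p q) *
          (∑ p : Fin 2, ∑ q : Fin 2, v k (p, q) • B p q)
        let C : Matrix (Fin 2) (Fin 2) R := fun i j => ∑ k : Fin 6, w (i, j) k • P k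
        C 0 0 = A 0 1 * B 1 0 ∧
        C 0 1 = A 0 0 * B 0 1 + A 0 1 * B 1 1 ∧
        C 1 0 = A 1 0 * B 0 0 + A 1 1 * B 1 0 ∧
        C 1 1 = A 1 0 * B 0 1 + A 1 1 * B 1 1 := by
  refine ⟨fun k pq => ![!![0, 1; 1, -1], !![0, 0; 1, -1], !![0, 1; 0, 0],
      !![0, 0; 1, 0], !![1, -1; -1, 1], !![0, -1; 0, 1]] k pq.1 pq.2,
    fun k pq => ![!![0, 1; -1, 1], !![0, 0; 1, -1], !![0, 0; 1, 0],
      !![-1, 1; -1, 1], !![0, 1; 0, 0], !![0, 1; 0, 1]] k pq.1 pq.2,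
    fun pq k => !![![0, 0, 1, 0, 0, 0], ![1, 1, 1, 0, 1, 0];
      ![1, 0, 1, -1, 0, 1], ![1, 1, 1, 0, 0, 1]] pq.1 pq.2 k, ?_⟩
  intro R _ A B
  refine ⟨?_, ?_, ?_, ?_⟩ <;>
    simp [Fin.sum_univ_succ] <;> ring
end

section
/- For every s ∈ ℕ, every commutative ring R, and all matrices A, B indexed by {0,1}^s × {0,1}^s with entries in R, the iterated pseudo-product C = A ⊗ B satisfies the closed form C_{xy} = Σ_{z ∈ {0,1}^s, x ∨ y ∨ z = 1^s} A_{xz} B_{zy} for all x, y ∈ {0,1}^s. -/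
/-- The iterated pseudo-product of matrices indexed by `{0,1}^s`, defined recursively
via the 2×2 block decomposition according to the first coordinate:
`C̄₀₀ = Ā₀₁ ⊗ B̄₁₀`, `C̄₀₁ = Ā₀₀ ⊗ B̄₀₁ + Ā₀₁ ⊗ B̄₁₁`,
`C̄₁₀ = Ā₁₀ ⊗ B̄₀₀ + Ā₁₁ ⊗ B̄₁₀`, `C̄₁₁ = Ā₁₀ ⊗ B̄₀₁ + Ā₁₁ ⊗ B̄₁₁`. -/
def pseudoMul {R : Type*} [CommRing R] :
    (s : ℕ) → ((Fin s → Bool) → (Fin s → Bool) → R) →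
      ((Fin s → Bool) → (Fin s → Bool) → R) →
      ((Fin s → Bool) → (Fin s → Bool) → R)
  | 0, A, B => fun x y => A x y * B x y
  | (s + 1), A, B => fun x y =>
    let Ab : Bool → Bool → (Fin s → Bool) → (Fin s → Bool) → R :=
      fun a b u v => A (Fin.cons a u) (Fin.cons b v)
    let Bb : Bool → Bool → (Fin s → Bool) → (Fin s → Bool) → R :=
      fun a b u v => B (Fin.cons a u) (Fin.cons b v)
    let x' : Fin s → Bool := fun i => x i.succ
    let y' : Fin s → Bool := fun i => y i.succ
    match x 0, y 0 with
    | false, false => pseudoMul s (Ab false true) (Bb true false) x' y'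
    | false, true => pseudoMul s (Ab false false) (Bb false true) x' y' +
        pseudoMul s (Ab false true) (Bb true true) x' y'
    | true, false => pseudoMul s (Ab true false) (Bb false false) x' y' +
        pseudoMul s (Ab true true) (Bb true false) x' y'
    | true, true => pseudoMul s (Ab true false) (Bb false true) x' y' +
        pseudoMul s (Ab true true) (Bb true true) x' y'

/-- Closed form for the iterated pseudo-product:
`C x y = ∑_{z : x ∨ y ∨ z = 1^s} A x z * B z y`. -/
theorem pseudoMul_eq_sum {R : Type*} [CommRing R] (s : ℕ)
    (A B : (Fin s → Bool) → (Fin s → Bool) → R) (x y : Fin s → Bool) :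
    pseudoMul s A B x y =
      ∑ z ∈ Finset.univ.filter (fun z : Fin s → Bool => ∀ i, (x i || y i || z i) = true),
        A x z * B z y := by
  induction s with
  | zero =>
    rw [Finset.filter_true_of_mem (fun z _ => fun i => i.elim0), Fintype.sum_unique]
    change A x y * B x y = _
    congr 1
    · congr 1
      exact Subsingleton.elim _ _
    · congr 1
      exact Subsingleton.elim _ _
  | succ s ih =>
    have hcx : (Fin.cons (x 0) (fun i => x i.succ) : Fin (s+1) → Bool) = x :=
      Fin.cons_self_tail x
    have hcy : (Fin.cons (y 0) (fun i => y i.succ) : Fin (s+1) → Bool) = y :=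
      Fin.cons_self_tail y
    rw [Finset.sum_filter, ← Equiv.sum_comp (Fin.consEquiv fun _ => Bool),
      Fintype.sum_prod_type, Fintype.sum_bool]
    simp only [Fin.consEquiv, Equiv.coe_fn_mk, Fin.forall_fin_succ, Fin.cons_zero, Fin.cons_succ]
    show pseudoMul (s+1) A B x y = _
    simp only [pseudoMul]
    cases hx : x 0 <;> cases hy : y 0 <;> rw [hx] at hcx <;> rw [hy] at hcy <;>
      simp [hx, hy, ih, Finset.sum_filter, hcx, hcy] <;> ring
end

section
/- Janson's inequality: let (Ω, P) be a probability space, ι a finite index set, and (X_i)_{i ∈ ι} an independent family of Boolean ({0,1}-valued) random variables. Let 𝒮 be a finite family of subsets of ι, and for S ∈ 𝒮 let E_S be the event that X_i = 1 for all i ∈ S. Let μ = Σ_{S ∈ 𝒮} P(E_S) and Δ = Σ_{(S,T) : S, T ∈ 𝒮, S ≠ T, S ∩ T ≠ ∅} P(E_S ∩ E_T) (sum over ordered pairs). Then the probability that none of the events E_S occurs satisfies P(⋂_{S ∈ 𝒮} E_S^c) ≤ exp(−μ + Δ/2). -/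
open Finset

namespace JansonAux

set_option linter.unusedSectionVars false

variable {ι : Type*} [Fintype ι] [DecidableEq ι] (p : ι → ℝ)

/-- product Bernoulli weight on `ι → Bool` -/
def jw (f : ι → Bool) : ℝ := ∏ i, if f i then p i else 1 - p i

/-- weight of a finite event -/
def jm (A : Finset (ι → Bool)) : ℝ := ∑ f ∈ A, jw p f

/-- principal event -/
def jprinc (S : Finset ι) : Finset (ι → Bool) :=
  Finset.univ.filter fun f => ∀ i ∈ S, f i = true

/-- "none of the events occurs" -/
def jF (𝒮 : Finset (Finset ι)) : Finset (ι → Bool) :=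
  Finset.univ.filter fun f => ∀ S ∈ 𝒮, ¬ ∀ i ∈ S, f i = true

variable {p}

lemma jw_nonneg (hp0 : ∀ i, 0 ≤ p i) (hp1 : ∀ i, p i ≤ 1) (f : ι → Bool) : 0 ≤ jw p f :=
  Finset.prod_nonneg fun i _ => by
    by_cases h : f i <;> simp [h, hp0 i, sub_nonneg.2 (hp1 i)]

lemma jm_nonneg (hp0 : ∀ i, 0 ≤ p i) (hp1 : ∀ i, p i ≤ 1) (A : Finset (ι → Bool)) :
    0 ≤ jm p A :=
  Finset.sum_nonneg fun f _ => jw_nonneg hp0 hp1 f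

lemma jm_mono (hp0 : ∀ i, 0 ≤ p i) (hp1 : ∀ i, p i ≤ 1) {A B : Finset (ι → Bool)}
    (h : A ⊆ B) : jm p A ≤ jm p B :=
  Finset.sum_le_sum_of_subset_of_nonneg h fun f _ _ => jw_nonneg hp0 hp1 f

lemma jm_univ : jm p (univ : Finset (ι → Bool)) = 1 := by
  have : jm p (univ : Finset (ι → Bool)) =
      ∏ i, ∑ b ∈ (univ : Finset Bool), (if b then p i else 1 - p i) := by
    rw [Finset.prod_univ_sum]
    rw [jm, ← Fintype.piFinset_univ]
    rfl
  simp only [this]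
  have : ∀ i : ι, ∑ b ∈ (univ : Finset Bool), (if b then p i else 1 - p i) = 1 := by
    intro i
    rw [show (univ : Finset Bool) = {true, false} by rfl]
    norm_num
  simp [this]

lemma jm_sdiff (A B : Finset (ι → Bool)) : jm p (A \ B) = jm p A - jm p (A ∩ B) := by
  rw [eq_sub_iff_add_eq, jm, jm, jm, ← Finset.sum_union]
  · congr 1
    ext f; by_cases hf : f ∈ B <;> simp [hf]
  · exact Finset.disjoint_left.2 fun f hf hg => (Finset.mem_sdiff.1 hf).2 (Finset.mem_inter.1 hg).2

lemma jm_union_le (hp0 : ∀ i, 0 ≤ p i) (hp1 : ∀ i, p i ≤ 1) (A B : Finset (ι → Bool)) :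
    jm p (A ∪ B) ≤ jm p A + jm p B := by
  have h := Finset.sum_union_inter (s₁ := A) (s₂ := B) (f := jw p)
  have := jm_nonneg hp0 hp1 (A ∩ B)
  simp only [jm] at *
  linarith

lemma jm_biUnion_le (hp0 : ∀ i, 0 ≤ p i) (hp1 : ∀ i, p i ≤ 1) {τ : Type*} [DecidableEq τ]
    (J : Finset τ) (g : τ → Finset (ι → Bool)) :
    jm p (J.biUnion g) ≤ ∑ T ∈ J, jm p (g T) := by
  classical
  induction J using Finset.induction_on with
  | empty => simp [jm]
  | insert T J' hT ih =>
    rw [Finset.biUnion_insert, Finset.sum_insert hT]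
    exact (jm_union_le hp0 hp1 _ _).trans (by linarith)

/-- Independence: if `A` only depends on coordinates in `S` and `B` only on
coordinates outside `S`, then the weight factorizes. -/
lemma jm_indep (S : Finset ι) (A B : Finset (ι → Bool))
    (hA : ∀ f g, (∀ i ∈ S, f i = g i) → f ∈ A → g ∈ A)
    (hB : ∀ f g, (∀ i ∉ S, f i = g i) → f ∈ B → g ∈ B) :
    jm p (A ∩ B) = jm p A * jm p B := by
  classical
  have key : ∑ q ∈ A ×ˢ B, jw p q.1 * jw p q.2
      = ∑ q ∈ (A ∩ B) ×ˢ (univ : Finset (ι → Bool)), jw p q.1 * jw p q.2 := by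
    refine Finset.sum_nbij'
      (fun q => (fun i => if i ∈ S then q.1 i else q.2 i,
                 fun i => if i ∈ S then q.2 i else q.1 i))
      (fun q => (fun i => if i ∈ S then q.1 i else q.2 i,
                 fun i => if i ∈ S then q.2 i else q.1 i)) ?_ ?_ ?_ ?_ ?_
    · rintro ⟨f, g⟩ hq
      rw [Finset.mem_product] at hq
      rw [Finset.mem_product, Finset.mem_inter]
      refine ⟨⟨hA f _ (fun i hi => by simp [hi]) hq.1,
        hB g _ (fun i hi => by simp [hi]) hq.2⟩, Finset.mem_univ _⟩
    · rintro ⟨f, g⟩ hq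
      rw [Finset.mem_product, Finset.mem_inter] at hq
      rw [Finset.mem_product]
      exact ⟨hA f _ (fun i hi => by simp [hi]) hq.1.1,
        hB f _ (fun i hi => by simp [hi]) hq.1.2⟩
    · rintro ⟨f, g⟩ _
      ext i <;> by_cases hi : i ∈ S <;> simp [hi]
    · rintro ⟨f, g⟩ _
      ext i <;> by_cases hi : i ∈ S <;> simp [hi]
    · rintro ⟨f, g⟩ _
      simp only [jw, ← Finset.prod_mul_distrib]
      refine Finset.prod_congr rfl fun i _ => ?_
      by_cases hi : i ∈ S <;> simp [hi, mul_comm]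
  have h1 : jm p A * jm p B = ∑ q ∈ A ×ˢ B, jw p q.1 * jw p q.2 := by
    rw [jm, jm, Finset.sum_mul_sum, Finset.sum_product]
  have h2 : ∑ q ∈ (A ∩ B) ×ˢ (univ : Finset (ι → Bool)), jw p q.1 * jw p q.2
      = jm p (A ∩ B) * jm p (univ : Finset (ι → Bool)) := by
    rw [jm, jm, Finset.sum_mul_sum, Finset.sum_product]
  rw [h1, key, h2, jm_univ, mul_one]

/-- Harris inequality: an up-set and a down-set are negatively correlated. -/
lemma jm_harris (hp0 : ∀ i, 0 ≤ p i) (hp1 : ∀ i, p i ≤ 1) (A D : Finset (ι → Bool))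
    (hA : ∀ f g, f ≤ g → f ∈ A → g ∈ A)
    (hD : ∀ f g, f ≤ g → g ∈ D → f ∈ D) :
    jm p (A ∩ D) ≤ jm p A * jm p D := by
  classical
  set B : Finset (ι → Bool) := univ \ D with hB
  have hBup : ∀ f g : ι → Bool, f ≤ g → f ∈ B → g ∈ B := by
    intro f g hfg hf
    simp only [hB, Finset.mem_sdiff, Finset.mem_univ, true_and] at hf ⊢
    exact fun hg => hf (hD f g hfg hg)
  -- indicator functions
  set χA : (ι → Bool) → ℝ := fun f => if f ∈ A then 1 else 0 with hχA
  set χB : (ι → Bool) → ℝ := fun f => if f ∈ B then 1 else 0 with hχB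
  have hmono : ∀ (C : Finset (ι → Bool)), (∀ f g : ι → Bool, f ≤ g → f ∈ C → g ∈ C) →
      Monotone (fun f => if f ∈ C then (1:ℝ) else 0) := by
    intro C hC f g hfg
    by_cases hf : f ∈ C
    · simp [hf, hC f g hfg hf]
    · by_cases hg : g ∈ C <;> simp [hf, hg]
  have hsup : ∀ a b : ι → Bool, jw p a * jw p b ≤ jw p (a ⊓ b) * jw p (a ⊔ b) := by
    intro a b
    simp only [jw, ← Finset.prod_mul_distrib]
    refine le_of_eq (Finset.prod_congr rfl fun i _ => ?_)
    have h1 : (a ⊓ b) i = a i ⊓ b i := rfl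
    have h2 : (a ⊔ b) i = a i ⊔ b i := rfl
    rw [h1, h2]
    cases ha : a i <;> cases hb : b i <;> simp [mul_comm]
  have hfkg := fkg χA χB (jw p) (fun f => jw_nonneg hp0 hp1 f)
    (fun f => by by_cases h : f ∈ A <;> simp [hχA, h])
    (fun f => by by_cases h : f ∈ B <;> simp [hχB, h])
    (hmono A hA) (hmono B hBup) hsup
  have eC : ∀ C : Finset (ι → Bool),
      ∑ a, jw p a * (if a ∈ C then (1:ℝ) else 0) = jm p C := by
    intro C
    simp only [mul_ite, mul_one, mul_zero]
    rw [Finset.sum_ite_mem, Finset.univ_inter, jm]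
  have eAB : ∑ a, jw p a * (χA a * χB a) = jm p (A ∩ B) := by
    rw [← eC (A ∩ B)]
    refine Finset.sum_congr rfl fun a _ => ?_
    congr 1
    by_cases h1 : a ∈ A <;> by_cases h2 : a ∈ B <;>
      simp [hχA, hχB, h1, h2, Finset.mem_inter]
  rw [eC A, eC B, eAB, show (∑ a : ι → Bool, jw p a) = 1 from jm_univ, one_mul] at hfkg
  have hBD : jm p B = 1 - jm p D := by
    rw [hB, jm_sdiff, jm_univ, Finset.univ_inter]
  have hABD : jm p (A ∩ B) = jm p A - jm p (A ∩ D) := by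
    have : A ∩ B = A \ D := by
      ext f; simp [hB, Finset.mem_sdiff, Finset.mem_inter, and_comm]
    rw [this, jm_sdiff]
  rw [hBD, hABD] at hfkg
  nlinarith [jm_nonneg hp0 hp1 A, jm_nonneg hp0 hp1 D]

lemma jprinc_mem {S : Finset ι} {f : ι → Bool} :
    f ∈ jprinc S ↔ ∀ i ∈ S, f i = true := by simp [jprinc]

lemma jF_mem {𝒮 : Finset (Finset ι)} {f : ι → Bool} :
    f ∈ jF 𝒮 ↔ ∀ S ∈ 𝒮, ¬ ∀ i ∈ S, f i = true := by simp [jF]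

lemma jprinc_up {S : Finset ι} {f g : ι → Bool} (hfg : f ≤ g) (hf : f ∈ jprinc S) :
    g ∈ jprinc S := by
  rw [jprinc_mem] at hf ⊢
  intro i hi
  have := hfg i
  rw [hf i hi] at this
  exact le_antisymm (Bool.le_true _) this

lemma jF_down {𝒮 : Finset (Finset ι)} {f g : ι → Bool} (hfg : f ≤ g) (hg : g ∈ jF 𝒮) :
    f ∈ jF 𝒮 := by
  rw [jF_mem] at hg ⊢
  intro S hS hf
  exact hg S hS fun i hi => by
    have := hfg i
    rw [hf i hi] at this
    exact le_antisymm (Bool.le_true _) this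

/-- The key step of the Boppana–Spencer argument. -/
lemma jm_step (hp0 : ∀ i, 0 ≤ p i) (hp1 : ∀ i, p i ≤ 1) (S : Finset ι)
    (𝒮 : Finset (Finset ι)) :
    jm p (jF (insert S 𝒮)) ≤ jm p (jF 𝒮) *
      Real.exp (-(jm p (jprinc S)) +
        ∑ T ∈ 𝒮.filter (fun T => (S ∩ T).Nonempty), jm p (jprinc S ∩ jprinc T)) := by
  classical
  set A : Finset (ι → Bool) := jprinc S with hA
  set J1 : Finset (Finset ι) := 𝒮.filter (fun T => (S ∩ T).Nonempty) with hJ1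
  set J0 : Finset (Finset ι) := 𝒮.filter (fun T => ¬ (S ∩ T).Nonempty) with hJ0
  set c : ℝ := ∑ T ∈ J1, jm p (jprinc S ∩ jprinc T) with hc
  have hc0 : 0 ≤ c := Finset.sum_nonneg fun T _ => jm_nonneg hp0 hp1 _
  -- jF 𝒮 ⊆ jF J0
  have hsub0 : jF (ι := ι) 𝒮 ⊆ jF J0 := by
    intro f hf
    rw [jF_mem] at hf ⊢
    exact fun T hT => hf T (Finset.mem_filter.1 hT).1
  -- the claim: jm (A ∩ jF 𝒮) ≥ jm (jF 𝒮) * (jm A - c)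
  have claim : jm p (jF 𝒮) * (jm p A - c) ≤ jm p (A ∩ jF 𝒮) := by
    by_cases hcase : jm p A - c ≤ 0
    · calc jm p (jF 𝒮) * (jm p A - c) ≤ 0 :=
            mul_nonpos_of_nonneg_of_nonpos (jm_nonneg hp0 hp1 _) hcase
        _ ≤ jm p (A ∩ jF 𝒮) := jm_nonneg hp0 hp1 _
    · push_neg at hcase
      -- union bound step
      have hsubU : A ∩ jF J0 ⊆ (A ∩ jF 𝒮) ∪
          J1.biUnion (fun T => (A ∩ jprinc T) ∩ jF J0) := by
        intro f hf
        rw [Finset.mem_inter] at hf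
        by_cases h1 : ∀ T ∈ J1, ¬ ∀ i ∈ T, f i = true
        · refine Finset.mem_union_left _ (Finset.mem_inter.2 ⟨hf.1, ?_⟩)
          rw [jF_mem]
          intro T hT
          by_cases hTn : (S ∩ T).Nonempty
          · exact h1 T (Finset.mem_filter.2 ⟨hT, hTn⟩)
          · exact (jF_mem.1 hf.2) T (Finset.mem_filter.2 ⟨hT, hTn⟩)
        · push_neg at h1
          obtain ⟨T, hT, hfT⟩ := h1
          refine Finset.mem_union_right _ (Finset.mem_biUnion.2 ⟨T, hT, ?_⟩)
          exact Finset.mem_inter.2 ⟨Finset.mem_inter.2 ⟨hf.1, jprinc_mem.2 hfT⟩, hf.2⟩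
      have hub : jm p (A ∩ jF J0) ≤ jm p (A ∩ jF 𝒮) +
          ∑ T ∈ J1, jm p ((A ∩ jprinc T) ∩ jF J0) :=
        (jm_mono hp0 hp1 hsubU).trans <| (jm_union_le hp0 hp1 _ _).trans <|
          add_le_add_right (jm_biUnion_le hp0 hp1 _ _) _
      -- independence: A ∩ jF J0 factorizes
      have hJ0det : ∀ f g : ι → Bool, (∀ i ∉ S, f i = g i) → f ∈ jF J0 → g ∈ jF J0 := by
        intro f g hfg hf
        rw [jF_mem] at hf ⊢
        intro T hT hgT
        refine hf T hT fun i hi => ?_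
        have hiS : i ∉ S := by
          intro hiS
          exact (Finset.mem_filter.1 hT).2 ⟨i, Finset.mem_inter.2 ⟨hiS, hi⟩⟩
        rw [hfg i hiS]; exact hgT i hi
      have hindep : jm p (A ∩ jF J0) = jm p A * jm p (jF J0) := by
        refine jm_indep S A (jF J0) ?_ hJ0det
        intro f g hfg hf
        rw [hA, jprinc_mem] at hf ⊢
        intro i hi
        rw [← hfg i hi]; exact hf i hi
      -- Harris: each error term
      have hharris : ∀ T ∈ J1, jm p ((A ∩ jprinc T) ∩ jF J0) ≤
          jm p (A ∩ jprinc T) * jm p (jF J0) := by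
        intro T _
        refine jm_harris hp0 hp1 _ _ ?_ ?_
        · intro f g hfg hf
          rw [Finset.mem_inter] at hf ⊢
          exact ⟨jprinc_up hfg hf.1, jprinc_up hfg hf.2⟩
        · intro f g hfg hg
          exact jF_down hfg hg
      have herr : ∑ T ∈ J1, jm p ((A ∩ jprinc T) ∩ jF J0) ≤ c * jm p (jF J0) := by
        rw [hc, Finset.sum_mul]
        refine Finset.sum_le_sum fun T hT => (hharris T hT).trans (le_of_eq ?_)
        rw [hA]
      have hJ0big : jm p (jF 𝒮) ≤ jm p (jF J0) := jm_mono hp0 hp1 hsub0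
      nlinarith [jm_nonneg hp0 hp1 (jF (ι := ι) J0)]
  -- now conclude
  have hins : jF (ι := ι) (insert S 𝒮) = jF 𝒮 \ A := by
    ext f
    rw [Finset.mem_sdiff, jF_mem, jF_mem, hA, jprinc_mem]
    constructor
    · intro h
      exact ⟨fun T hT => h T (Finset.mem_insert_of_mem hT), h S (Finset.mem_insert_self _ _)⟩
    · rintro ⟨h1, h2⟩ T hT
      rcases Finset.mem_insert.1 hT with rfl | hT'
      · exact h2
      · exact h1 T hT'
  have hsd : jm p (jF (insert S 𝒮)) = jm p (jF 𝒮) - jm p (A ∩ jF 𝒮) := by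
    rw [hins, jm_sdiff, Finset.inter_comm]
  have hexp : 1 - (jm p A - c) ≤ Real.exp (-(jm p A) + c) := by
    have := Real.add_one_le_exp (-(jm p A) + c)
    linarith
  calc jm p (jF (insert S 𝒮)) = jm p (jF 𝒮) - jm p (A ∩ jF 𝒮) := hsd
    _ ≤ jm p (jF 𝒮) * (1 - (jm p A - c)) := by nlinarith [claim]
    _ ≤ jm p (jF 𝒮) * Real.exp (-(jm p A) + c) :=
        mul_le_mul_of_nonneg_left hexp (jm_nonneg hp0 hp1 _)

/-- Janson's inequality in the finite model. -/
lemma jm_janson (hp0 : ∀ i, 0 ≤ p i) (hp1 : ∀ i, p i ≤ 1) (𝒮 : Finset (Finset ι)) :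
    jm p (jF 𝒮) ≤ Real.exp (-(∑ S ∈ 𝒮, jm p (jprinc S)) +
      (∑ q ∈ (𝒮 ×ˢ 𝒮).filter (fun q : Finset ι × Finset ι =>
        q.1 ≠ q.2 ∧ (q.1 ∩ q.2).Nonempty), jm p (jprinc q.1 ∩ jprinc q.2)) / 2) := by
  classical
  induction 𝒮 using Finset.induction_on with
  | empty => simp [jF, jm_univ]
  | @insert S 𝒮 hS ih =>
    set g : Finset ι × Finset ι → ℝ := fun q => jm p (jprinc q.1 ∩ jprinc q.2) with hg
    set J1 : Finset (Finset ι) := 𝒮.filter (fun T => (S ∩ T).Nonempty) with hJ1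
    set c : ℝ := ∑ T ∈ J1, jm p (jprinc S ∩ jprinc T) with hc
    set D : ℝ := ∑ q ∈ (𝒮 ×ˢ 𝒮).filter (fun q : Finset ι × Finset ι =>
        q.1 ≠ q.2 ∧ (q.1 ∩ q.2).Nonempty), g q with hD
    set D' : ℝ := ∑ q ∈ ((insert S 𝒮) ×ˢ (insert S 𝒮)).filter
        (fun q : Finset ι × Finset ι => q.1 ≠ q.2 ∧ (q.1 ∩ q.2).Nonempty), g q with hD'
    have hDD' : D + 2 * c ≤ D' := by
      have hsubs : ((𝒮 ×ˢ 𝒮).filter (fun q : Finset ι × Finset ι =>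
            q.1 ≠ q.2 ∧ (q.1 ∩ q.2).Nonempty)) ∪ ({S} ×ˢ J1) ∪ (J1 ×ˢ {S}) ⊆
          ((insert S 𝒮) ×ˢ (insert S 𝒮)).filter
            (fun q : Finset ι × Finset ι => q.1 ≠ q.2 ∧ (q.1 ∩ q.2).Nonempty) := by
        rintro ⟨a, b⟩ hq
        simp only [Finset.mem_union, Finset.mem_filter, Finset.mem_product,
          Finset.mem_singleton, hJ1] at hq ⊢
        rcases hq with (⟨⟨ha, hb⟩, hab⟩ | ⟨rfl, hb, hbn⟩) | ⟨⟨ha, han⟩, rfl⟩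
        · exact ⟨⟨Finset.mem_insert_of_mem ha, Finset.mem_insert_of_mem hb⟩, hab⟩
        · exact ⟨⟨Finset.mem_insert_self _ _, Finset.mem_insert_of_mem hb⟩,
            fun h => hS (h ▸ hb), hbn⟩
        · refine ⟨⟨Finset.mem_insert_of_mem ha, Finset.mem_insert_self _ _⟩,
            fun h => hS (h ▸ ha), ?_⟩
          rwa [Finset.inter_comm]
      have hg0 : ∀ q ∈ ((insert S 𝒮) ×ˢ (insert S 𝒮)).filter
          (fun q : Finset ι × Finset ι => q.1 ≠ q.2 ∧ (q.1 ∩ q.2).Nonempty), 0 ≤ g q :=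
        fun q _ => jm_nonneg hp0 hp1 _
      have hd1 : Disjoint ((𝒮 ×ˢ 𝒮).filter (fun q : Finset ι × Finset ι =>
          q.1 ≠ q.2 ∧ (q.1 ∩ q.2).Nonempty)) ({S} ×ˢ J1) := by
        rw [Finset.disjoint_left]
        rintro ⟨a, b⟩ hq hq'
        simp only [Finset.mem_filter, Finset.mem_product, Finset.mem_singleton, hJ1] at hq hq'
        exact hS (hq'.1 ▸ hq.1.1)
      have hd2 : Disjoint (((𝒮 ×ˢ 𝒮).filter (fun q : Finset ι × Finset ι =>
          q.1 ≠ q.2 ∧ (q.1 ∩ q.2).Nonempty)) ∪ ({S} ×ˢ J1)) (J1 ×ˢ {S}) := by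
        rw [Finset.disjoint_left]
        rintro ⟨a, b⟩ hq hq'
        simp only [Finset.mem_union, Finset.mem_filter, Finset.mem_product,
          Finset.mem_singleton, hJ1] at hq hq'
        rcases hq with ⟨⟨_, hb⟩, _⟩ | ⟨_, hb, _⟩ <;> exact hS (hq'.2 ▸ hb)
      have hsum : ∑ q ∈ ((𝒮 ×ˢ 𝒮).filter (fun q : Finset ι × Finset ι =>
            q.1 ≠ q.2 ∧ (q.1 ∩ q.2).Nonempty)) ∪ ({S} ×ˢ J1) ∪ (J1 ×ˢ {S}), g q
          = D + c + c := by
        rw [Finset.sum_union hd2, Finset.sum_union hd1]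
        congr 1
        · congr 1
          rw [hc, Finset.sum_product, Finset.sum_singleton]
        · rw [hc, Finset.sum_product_right, Finset.sum_singleton]
          refine Finset.sum_congr rfl fun T _ => ?_
          rw [hg]
          simp only []
          rw [Finset.inter_comm]
      calc D + 2 * c = D + c + c := by ring
        _ = _ := hsum.symm
        _ ≤ D' := Finset.sum_le_sum_of_subset_of_nonneg hsubs fun q hq _ => hg0 q hq
    have hμ : ∑ T ∈ insert S 𝒮, jm p (jprinc T) = jm p (jprinc S) + ∑ T ∈ 𝒮, jm p (jprinc T) :=
      Finset.sum_insert hS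
    calc jm p (jF (insert S 𝒮))
        ≤ jm p (jF 𝒮) * Real.exp (-(jm p (jprinc S)) + c) := jm_step hp0 hp1 S 𝒮
      _ ≤ Real.exp (-(∑ T ∈ 𝒮, jm p (jprinc T)) + D / 2) *
            Real.exp (-(jm p (jprinc S)) + c) :=
          mul_le_mul_of_nonneg_right ih (Real.exp_pos _).le
      _ = Real.exp (-(∑ T ∈ insert S 𝒮, jm p (jprinc T)) + (D + 2 * c) / 2) := by
          rw [← Real.exp_add, hμ]; ring_nf
      _ ≤ _ := by
          rw [Real.exp_le_exp]
          have := hDD'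
          linarith

open MeasureTheory ProbabilityTheory in
/-- Transfer lemma: probabilities of events determined by the Boolean vector
`(X i)_i` equal the corresponding weights in the finite model. -/
lemma transfer {Ω : Type*} [MeasurableSpace Ω] (P : Measure Ω)
    [IsProbabilityMeasure P] (X : ι → Ω → Bool) (hmeas : ∀ i, Measurable (X i))
    (hindep : iIndepFun X P)
    (q : (ι → Bool) → Prop) [DecidablePred q] :
    (P {ω | q (fun i => X i ω)}).toReal
      = jm (fun i => (P {ω | X i ω = true}).toReal) (univ.filter q) := by
  classical
  set p : ι → ℝ := fun i => (P {ω | X i ω = true}).toReal with hp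
  have hsets : {ω | q (fun i => X i ω)}
      = ⋃ f ∈ univ.filter q, ⋂ i, X i ⁻¹' ({f i} : Set Bool) := by
    ext ω
    simp only [Set.mem_setOf_eq, Set.mem_iUnion, Set.mem_iInter, Set.mem_preimage,
      Set.mem_singleton_iff, Finset.mem_filter, Finset.mem_univ, true_and]
    constructor
    · intro hq
      exact ⟨fun i => X i ω, hq, fun i => rfl⟩
    · rintro ⟨f, hf, hfe⟩
      have : (fun i => X i ω) = f := funext hfe
      rwa [this]
  have hatomeq : ∀ f : ι → Bool,
      P (⋂ i, X i ⁻¹' ({f i} : Set Bool)) = ∏ i, P (X i ⁻¹' ({f i} : Set Bool)) := by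
    intro f
    exact hindep.meas_iInter fun i => ⟨{f i}, trivial, rfl⟩
  have hmeasatom : ∀ f : ι → Bool, MeasurableSet (⋂ i, X i ⁻¹' ({f i} : Set Bool)) :=
    fun f => MeasurableSet.iInter fun i => hmeas i (measurableSet_singleton _)
  have hdisj : (↑(univ.filter q) : Set (ι → Bool)).PairwiseDisjoint
      (fun f => ⋂ i, X i ⁻¹' ({f i} : Set Bool)) := by
    intro f _ g _ hfg
    rw [Function.onFun, Set.disjoint_left]
    intro ω hf hg
    simp only [Set.mem_iInter, Set.mem_preimage, Set.mem_singleton_iff] at hf hg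
    exact hfg (funext fun i => (hf i).symm.trans (hg i))
  rw [hsets, measure_biUnion_finset hdisj fun f _ => hmeasatom f]
  rw [ENNReal.toReal_sum (fun f _ => measure_ne_top _ _)]
  refine Finset.sum_congr rfl fun f _ => ?_
  rw [hatomeq, ENNReal.toReal_prod, jw]
  refine Finset.prod_congr rfl fun i _ => ?_
  cases hfi : f i
  · have hcompl : X i ⁻¹' ({false} : Set Bool) = {ω | X i ω = true}ᶜ := by
      ext ω
      simp only [Set.mem_preimage, Set.mem_singleton_iff, Set.mem_compl_iff, Set.mem_setOf_eq]
      cases X i ω <;> simp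
    have hms : MeasurableSet {ω | X i ω = true} := hmeas i (measurableSet_singleton true)
    rw [if_neg Bool.false_ne_true, hcompl, prob_compl_eq_one_sub hms,
      ENNReal.toReal_sub_of_le prob_le_one ENNReal.one_ne_top, ENNReal.toReal_one]
  · rw [if_pos rfl]
    rfl

end JansonAux

open MeasureTheory ProbabilityTheory




open MeasureTheory ProbabilityTheory

/-- Janson's inequality.  Given an independent family of Boolean random variables
`(X i)_{i ∈ ι}` and a finite family `𝒮` of index sets, with principal events
`E_S = {ω | ∀ i ∈ S, X i ω = 1}`, setting `μ = ∑_{S ∈ 𝒮} P(E_S)` and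
`Δ = ∑_{S ≠ T, S ∩ T ≠ ∅} P(E_S ∩ E_T)` (over ordered pairs), the probability that
none of the events occurs is at most `exp(-μ + Δ/2)`. -/
theorem janson_inequality {Ω : Type*} [MeasurableSpace Ω] (P : Measure Ω)
    [IsProbabilityMeasure P] {ι : Type*} [Fintype ι] [DecidableEq ι]
    (X : ι → Ω → Bool) (hmeas : ∀ i, Measurable (X i))
    (hindep : iIndepFun X P)
    (𝒮 : Finset (Finset ι)) :
    let E : Finset ι → Set Ω := fun S => {ω | ∀ i ∈ S, X i ω = true}
    let μ : ℝ := ∑ S ∈ 𝒮, (P (E S)).toReal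
    let Δ : ℝ := ∑ p ∈ (𝒮 ×ˢ 𝒮).filter
        (fun p : Finset ι × Finset ι => p.1 ≠ p.2 ∧ (p.1 ∩ p.2).Nonempty),
      (P (E p.1 ∩ E p.2)).toReal
    (P (⋂ S ∈ 𝒮, (E S)ᶜ)).toReal ≤ Real.exp (-μ + Δ / 2) := by

  intro E μ Δ
  classical
  set p : ι → ℝ := fun i => (P {ω | X i ω = true}).toReal with hp
  have hp0 : ∀ i, 0 ≤ p i := fun i => ENNReal.toReal_nonneg
  have hp1 : ∀ i, p i ≤ 1 := fun i => by
    have := ENNReal.toReal_mono ENNReal.one_ne_top (prob_le_one (μ := P) (s := {ω | X i ω = true}))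
    simpa using this
  have hE : ∀ S : Finset ι, (P (E S)).toReal = JansonAux.jm p (JansonAux.jprinc S) := by
    intro S
    have h := JansonAux.transfer P X hmeas hindep (fun f : ι → Bool => ∀ i ∈ S, f i = true)
    have hset : E S = {ω | (fun f : ι → Bool => ∀ i ∈ S, f i = true) (fun i => X i ω)} := rfl
    rw [hset, h]
    congr 1
  have hET : ∀ S T : Finset ι, (P (E S ∩ E T)).toReal
      = JansonAux.jm p (JansonAux.jprinc S ∩ JansonAux.jprinc T) := by
    intro S T
    have h := JansonAux.transfer P X hmeas hindep
      (fun f : ι → Bool => (∀ i ∈ S, f i = true) ∧ (∀ i ∈ T, f i = true))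
    have hset : E S ∩ E T = {ω | (fun f : ι → Bool =>
        (∀ i ∈ S, f i = true) ∧ (∀ i ∈ T, f i = true)) (fun i => X i ω)} := rfl
    rw [hset, h]
    congr 1
    ext f
    simp [JansonAux.jprinc]
  have hF : (P (⋂ S ∈ 𝒮, (E S)ᶜ)).toReal = JansonAux.jm p (JansonAux.jF 𝒮) := by
    have h := JansonAux.transfer P X hmeas hindep
      (fun f : ι → Bool => ∀ S ∈ 𝒮, ¬ ∀ i ∈ S, f i = true)
    have hset : (⋂ S ∈ 𝒮, (E S)ᶜ) = {ω | (fun f : ι → Bool =>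
        ∀ S ∈ 𝒮, ¬ ∀ i ∈ S, f i = true) (fun i => X i ω)} := by
      ext ω
      simp [E]
    rw [hset, h]
    congr 1
  have hμ : μ = ∑ S ∈ 𝒮, JansonAux.jm p (JansonAux.jprinc S) :=
    Finset.sum_congr rfl fun S _ => hE S
  have hΔ : Δ = ∑ q ∈ (𝒮 ×ˢ 𝒮).filter
      (fun q : Finset ι × Finset ι => q.1 ≠ q.2 ∧ (q.1 ∩ q.2).Nonempty),
      JansonAux.jm p (JansonAux.jprinc q.1 ∩ JansonAux.jprinc q.2) :=
    Finset.sum_congr rfl fun q _ => hET q.1 q.2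
  rw [hF, hμ, hΔ]
  exact JansonAux.jm_janson hp0 hp1 𝒮
end

section
/- There exists a constant C > 0 such that for every integer s ≥ 1, Σ_{ℓ=0}^{⌊4s/7⌋} C(s, ℓ) · 16^ℓ · 9^{s−ℓ} ≤ C · α1^s / √s, where α1 = 14 · 54^{1/7} and C(s, ℓ) denotes the binomial coefficient. -/
open Real Stirling Nat
open Real Stirling Nat

lemma stirling_lb (n : ℕ) (hn : n ≠ 0) : Real.sqrt π ≤ stirlingSeq n := by
  obtain ⟨k, rfl⟩ := Nat.exists_eq_succ_of_ne_zero hn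
  have h := stirlingSeq'_antitone
  have := h.le_of_tendsto (by
    have := tendsto_stirlingSeq_sqrt_pi
    exact this.comp (Filter.tendsto_add_atTop_nat 1)) k
  simpa using this

lemma stirling_ub (n : ℕ) : stirlingSeq n ≤ 2 := by
  cases n with
  | zero => simp [stirlingSeq_zero]
  | succ k =>
    have h1 : stirlingSeq (k+1) ≤ stirlingSeq 1 := by
      have := stirlingSeq'_antitone (Nat.zero_le k)
      simpa using this
    have h2 : stirlingSeq 1 ≤ 2 := by
      rw [stirlingSeq_one]
      rw [div_le_iff₀ (by positivity)]
      have he : Real.exp 1 < 2.7182818286 := Real.exp_one_lt_d9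
      have hs : (2.8 : ℝ) ≤ 2 * Real.sqrt 2 := by
        nlinarith [Real.sq_sqrt (by norm_num : (2:ℝ) ≥ 0), Real.sqrt_nonneg 2]
      linarith
    linarith

lemma fact_lb (n : ℕ) (hn : n ≠ 0) :
    Real.sqrt π * (Real.sqrt (2*n) * ((n : ℝ)/Real.exp 1)^n) ≤ (n ! : ℝ) := by
  have hd : 0 < Real.sqrt (2*n) * ((n : ℝ)/Real.exp 1)^n := by
    have : 0 < (n:ℝ) := by exact_mod_cast Nat.pos_of_ne_zero hn
    positivity
  have := stirling_lb n hn
  rw [stirlingSeq, le_div_iff₀ hd] at this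
  linarith

lemma fact_ub (n : ℕ) (hn : n ≠ 0) :
    (n ! : ℝ) ≤ 2 * (Real.sqrt (2*n) * ((n : ℝ)/Real.exp 1)^n) := by
  have hd : 0 < Real.sqrt (2*n) * ((n : ℝ)/Real.exp 1)^n := by
    have : 0 < (n:ℝ) := by exact_mod_cast Nat.pos_of_ne_zero hn
    positivity
  have := stirling_ub n
  rw [stirlingSeq, div_le_iff₀ hd] at this
  linarith

lemma choose_ub (m k : ℕ) (hm : m ≠ 0) (hk : k ≠ 0) :
    ((m+k).choose m : ℝ) * (π * (Real.sqrt (2*m) * Real.sqrt (2*k)) * ((m:ℝ)^m * (k:ℝ)^k)) ≤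
      2 * Real.sqrt (2*(m+k)) * ((m+k:ℕ):ℝ)^(m+k) := by
  have hid : ((m+k).choose m : ℝ) * (m ! : ℝ) * (k ! : ℝ) = ((m+k)! : ℝ) := by
    have := Nat.choose_mul_factorial_mul_factorial (Nat.le_add_right m k)
    rw [Nat.add_sub_cancel_left] at this
    exact_mod_cast congrArg (Nat.cast : ℕ → ℝ) this
  have hc : (0:ℝ) ≤ ((m+k).choose m : ℝ) := by positivity
  have hmpos : (0:ℝ) < m := by exact_mod_cast Nat.pos_of_ne_zero hm
  have hkpos : (0:ℝ) < k := by exact_mod_cast Nat.pos_of_ne_zero hk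
  have h1 : ((m+k).choose m : ℝ) * (Real.sqrt π * (Real.sqrt (2*m) * ((m:ℝ)/Real.exp 1)^m))
      * (Real.sqrt π * (Real.sqrt (2*k) * ((k:ℝ)/Real.exp 1)^k))
      ≤ 2 * (Real.sqrt (2*(m+k)) * (((m+k:ℕ):ℝ)/Real.exp 1)^(m+k)) := by
    calc ((m+k).choose m : ℝ) * (Real.sqrt π * (Real.sqrt (2*m) * ((m:ℝ)/Real.exp 1)^m))
        * (Real.sqrt π * (Real.sqrt (2*k) * ((k:ℝ)/Real.exp 1)^k))
        ≤ ((m+k).choose m : ℝ) * (m ! : ℝ) * (k ! : ℝ) := by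
          have l1 := fact_lb m hm
          have l2 := fact_lb k hk
          have p1 : (0:ℝ) ≤ Real.sqrt π * (Real.sqrt (2*m) * ((m:ℝ)/Real.exp 1)^m) := by positivity
          have p2 : (0:ℝ) ≤ Real.sqrt π * (Real.sqrt (2*k) * ((k:ℝ)/Real.exp 1)^k) := by positivity
          have pf1 : (0:ℝ) ≤ (m ! : ℝ) := by positivity
          gcongr
      _ = ((m+k)! : ℝ) := hid
      _ ≤ 2 * (Real.sqrt (2*(m+k)) * (((m+k:ℕ):ℝ)/Real.exp 1)^(m+k)) := by
          exact_mod_cast fact_ub (m+k) (by omega)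
  have he : (0:ℝ) < Real.exp 1 := Real.exp_pos 1
  have hπ : Real.sqrt π * Real.sqrt π = π := Real.mul_self_sqrt Real.pi_pos.le
  have hmul := mul_le_mul_of_nonneg_right h1 (le_of_lt (pow_pos he (m+k)))
  calc ((m+k).choose m : ℝ) * (π * (Real.sqrt (2*m) * Real.sqrt (2*k)) * ((m:ℝ)^m * (k:ℝ)^k))
      = ((m+k).choose m : ℝ) * (Real.sqrt π * (Real.sqrt (2*m) * ((m:ℝ)/Real.exp 1)^m))
        * (Real.sqrt π * (Real.sqrt (2*k) * ((k:ℝ)/Real.exp 1)^k)) * (Real.exp 1)^(m+k) := by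
        field_simp [div_pow]
        rw [Real.sq_sqrt Real.pi_pos.le, div_pow, div_pow, pow_add]
        field_simp
    _ ≤ 2 * (Real.sqrt (2*(m+k)) * (((m+k:ℕ):ℝ)/Real.exp 1)^(m+k)) * (Real.exp 1)^(m+k) := hmul
    _ = 2 * Real.sqrt (2*(m+k)) * ((m+k:ℕ):ℝ)^(m+k) := by
        push_cast
        have hdc : ((m:ℝ)+k)^(m+k) / Real.exp 1^(m+k) * Real.exp 1^(m+k) = ((m:ℝ)+k)^(m+k) :=
          div_mul_cancel₀ _ (by positivity)
        rw [div_pow]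
        linear_combination 2 * Real.sqrt (2*((m:ℝ)+k)) * hdc

lemma entropy (m k : ℕ) (hm : m ≠ 0) (hk : k ≠ 0)
    (h7 : (4:ℝ)*((m:ℝ)+k) ≤ 7*m + 7) (h7' : (7:ℝ)*m ≤ 4*((m:ℝ)+k)) :
    (4*((m:ℝ)+k)/7)^m * (3*((m:ℝ)+k)/7)^k ≤ (m:ℝ)^m * (k:ℝ)^k := by
  have hmpos : (0:ℝ) < m := by exact_mod_cast Nat.pos_of_ne_zero hm
  have hkpos : (0:ℝ) < k := by exact_mod_cast Nat.pos_of_ne_zero hk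
  have hk1 : (1:ℝ) ≤ k := by exact_mod_cast Nat.one_le_iff_ne_zero.mpr hk
  set δ : ℝ := 4*((m:ℝ)+k)/7 - m with hδ
  have hδ0 : 0 ≤ δ := by rw [hδ]; linarith
  have hδ1 : δ ≤ 1 := by rw [hδ]; linarith
  have h1 : 4*((m:ℝ)+k)/7 = (m:ℝ) + δ := by rw [hδ]; ring
  have h2 : 3*((m:ℝ)+k)/7 = (k:ℝ) - δ := by rw [hδ]; ring
  have e1 : ((m:ℝ) + δ)^m ≤ (m:ℝ)^m * Real.exp δ := by
    have hrw : (m:ℝ) + δ = m * (1 + δ/m) := by field_simp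
    have hle : 1 + δ/m ≤ Real.exp (δ/m) := by
      linarith [Real.add_one_le_exp (δ/m)]
    have hnn : (0:ℝ) ≤ 1 + δ/m := by positivity
    calc ((m:ℝ) + δ)^m = (m:ℝ)^m * (1 + δ/m)^m := by rw [hrw, mul_pow]
      _ ≤ (m:ℝ)^m * (Real.exp (δ/m))^m := by gcongr
      _ = (m:ℝ)^m * Real.exp δ := by
          rw [← Real.exp_nat_mul]
          congr 1
          field_simp
  have e2 : ((k:ℝ) - δ)^k ≤ (k:ℝ)^k * Real.exp (-δ) := by
    have hrw : (k:ℝ) - δ = k * (1 - δ/k) := by field_simp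
    have hle : 1 - δ/k ≤ Real.exp (-(δ/k)) := by
      linarith [Real.add_one_le_exp (-(δ/k))]
    have hnn : (0:ℝ) ≤ 1 - δ/k := by
      have : δ/k ≤ 1 := by rw [div_le_one hkpos]; linarith
      linarith
    calc ((k:ℝ) - δ)^k = (k:ℝ)^k * (1 - δ/k)^k := by rw [hrw, mul_pow]
      _ ≤ (k:ℝ)^k * (Real.exp (-(δ/k)))^k := by gcongr
      _ = (k:ℝ)^k * Real.exp (-δ) := by
          rw [← Real.exp_nat_mul]
          congr 1
          field_simp
  have hnn2 : (0:ℝ) ≤ ((k:ℝ) - δ)^k := by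
    apply pow_nonneg; nlinarith
  calc (4*((m:ℝ)+k)/7)^m * (3*((m:ℝ)+k)/7)^k = ((m:ℝ) + δ)^m * ((k:ℝ) - δ)^k := by rw [h1, h2]
    _ ≤ ((m:ℝ)^m * Real.exp δ) * ((k:ℝ)^k * Real.exp (-δ)) := by
        apply mul_le_mul e1 e2 hnn2 (by positivity)
    _ = (m:ℝ)^m * (k:ℝ)^k * (Real.exp δ * Real.exp (-δ)) := by ring
    _ = (m:ℝ)^m * (k:ℝ)^k := by rw [← Real.exp_add]; simp

lemma central (m k : ℕ) (hm : m ≠ 0) (hk : k ≠ 0)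
    (h4m : m + k ≤ 4*m) (h4k : m + k ≤ 4*k)
    (h7 : 4*(m+k) ≤ 7*m + 7) (h7' : 7*m ≤ 4*(m+k)) :
    ((m+k).choose m : ℝ) * 4^m * 3^k * Real.sqrt ((m:ℝ)+k) ≤ 2 * 7^(m+k) := by
  have hmpos : (0:ℝ) < m := by exact_mod_cast Nat.pos_of_ne_zero hm
  have hkpos : (0:ℝ) < k := by exact_mod_cast Nat.pos_of_ne_zero hk
  set s : ℝ := (m:ℝ) + k with hs
  have hspos : 0 < s := by positivity
  set P : ℝ := π * (Real.sqrt (2*m) * Real.sqrt (2*k)) * ((m:ℝ)^m * (k:ℝ)^k) with hP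
  have hPpos : 0 < P := by
    rw [hP]; positivity
  rw [← mul_le_mul_iff_of_pos_right hPpos]
  have step1 : ((m+k).choose m : ℝ) * 4^m * 3^k * Real.sqrt s * P
      ≤ (2 * Real.sqrt (2*s) * s^(m+k)) * (4^m * 3^k * Real.sqrt s) := by
    have h := choose_ub m k hm hk
    have hcast : ((m+k:ℕ):ℝ) = s := by push_cast; ring
    have hcast2 : Real.sqrt (2*((m:ℕ)+(k:ℕ):ℕ)) = Real.sqrt (2*s) := by
      congr 1; push_cast; ring
    rw [hcast, ← hs] at h
    calc ((m+k).choose m : ℝ) * 4^m * 3^k * Real.sqrt s * P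
        = (((m+k).choose m : ℝ) * P) * (4^m * 3^k * Real.sqrt s) := by ring
      _ ≤ (2 * Real.sqrt (2*s) * s^(m+k)) * (4^m * 3^k * Real.sqrt s) := by
          gcongr
  have step2 : s^(m+k) * (4^m * 3^k) ≤ 7^(m+k) * ((m:ℝ)^m * (k:ℝ)^k) := by
    have hent := entropy m k hm hk (by exact_mod_cast h7) (by exact_mod_cast h7')
    have hid : s^(m+k) * ((4:ℝ)^m * 3^k) = 7^(m+k) * ((4*s/7)^m * (3*s/7)^k) := by
      rw [div_pow, div_pow, mul_pow, mul_pow, pow_add, pow_add]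
      field_simp
    rw [hid]
    gcongr
  have step3 : Real.sqrt (2*s) * Real.sqrt s ≤ π * (Real.sqrt (2*m) * Real.sqrt (2*k)) := by
    have h1 : Real.sqrt (2*s) * Real.sqrt s = Real.sqrt 2 * s := by
      rw [Real.sqrt_mul (by norm_num : (0:ℝ) ≤ 2)]
      rw [mul_assoc, Real.mul_self_sqrt hspos.le]
    have h2 : Real.sqrt (2*m) * Real.sqrt (2*k) = 2 * Real.sqrt ((m:ℝ)*k) := by
      rw [Real.sqrt_mul (by norm_num : (0:ℝ) ≤ 2), Real.sqrt_mul (by norm_num : (0:ℝ) ≤ 2),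
        Real.sqrt_mul hmpos.le]
      have h22 : Real.sqrt 2 * Real.sqrt 2 = 2 := Real.mul_self_sqrt (by norm_num)
      linear_combination (Real.sqrt (m:ℝ) * Real.sqrt (k:ℝ)) * h22
    have h3 : s/4 ≤ Real.sqrt ((m:ℝ)*k) := by
      have hsq : (s/4)^2 ≤ (m:ℝ)*k := by
        have hm' : s ≤ 4*(m:ℝ) := by rw [hs]; exact_mod_cast h4m
        have hk' : s ≤ 4*(k:ℝ) := by rw [hs]; exact_mod_cast h4k
        nlinarith
      calc s/4 = Real.sqrt ((s/4)^2) := by rw [Real.sqrt_sq (by positivity)]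
        _ ≤ Real.sqrt ((m:ℝ)*k) := Real.sqrt_le_sqrt hsq
    have hsqrt2 : Real.sqrt 2 ≤ 1.5 := by
      rw [show (1.5:ℝ) = Real.sqrt (1.5^2) by rw [Real.sqrt_sq]; norm_num]
      apply Real.sqrt_le_sqrt; norm_num
    have hpi : (3:ℝ) ≤ π := le_of_lt Real.pi_gt_three
    rw [h1, h2]
    nlinarith [Real.sqrt_nonneg ((m:ℝ)*k)]
  calc ((m+k).choose m : ℝ) * 4^m * 3^k * Real.sqrt s * P
      ≤ (2 * Real.sqrt (2*s) * s^(m+k)) * (4^m * 3^k * Real.sqrt s) := step1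
    _ = (Real.sqrt (2*s) * Real.sqrt s) * (2 * (s^(m+k) * (4^m * 3^k))) := by ring
    _ ≤ (π * (Real.sqrt (2*m) * Real.sqrt (2*k))) * (2 * (7^(m+k) * ((m:ℝ)^m * (k:ℝ)^k))) := by
        apply mul_le_mul step3 (by linarith [step2]) (by positivity) (by positivity)
    _ = 2 * 7^(m+k) * P := by rw [hP]; ring

lemma geom_dom (t : ℕ → ℝ) (m : ℕ) (hnn : ∀ ℓ, 0 ≤ t ℓ)
    (h : ∀ ℓ < m, t ℓ ≤ 3/4 * t (ℓ+1)) :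
    ∑ ℓ ∈ Finset.range (m+1), t ℓ ≤ 4 * t m := by
  induction m with
  | zero => simpa using by linarith [hnn 0]
  | succ n ih =>
    rw [Finset.sum_range_succ]
    have h1 : ∑ ℓ ∈ Finset.range (n+1), t ℓ ≤ 4 * t n := ih (fun ℓ hl => h ℓ (by omega))
    have h2 := h n (by omega)
    linarith

lemma ratio_step (s ℓ : ℕ) (hℓ : 7*(ℓ+1) ≤ 4*s) :
    (s.choose ℓ * 16^ℓ * 9^(s-ℓ) : ℝ) ≤ 3/4 * (s.choose (ℓ+1) * 16^(ℓ+1) * 9^(s-(ℓ+1))) := by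
  have hls : ℓ + 1 ≤ s := by omega
  have key := Nat.choose_succ_right_eq s ℓ
  have h3 : 3 * (ℓ+1) ≤ 4 * (s - ℓ) := by omega
  have hmul : (3 * s.choose ℓ) * (ℓ+1) ≤ (4 * s.choose (ℓ+1)) * (ℓ+1) := by
    calc (3 * s.choose ℓ) * (ℓ+1) = s.choose ℓ * (3*(ℓ+1)) := by ring
      _ ≤ s.choose ℓ * (4*(s-ℓ)) := Nat.mul_le_mul_left _ h3
      _ = 4 * (s.choose ℓ * (s-ℓ)) := by ring
      _ = 4 * (s.choose (ℓ+1) * (ℓ+1)) := by rw [← key]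
      _ = (4 * s.choose (ℓ+1)) * (ℓ+1) := by ring
  have hnat : 3 * s.choose ℓ ≤ 4 * s.choose (ℓ+1) :=
    Nat.le_of_mul_le_mul_right hmul (by omega)
  have hcast : (3:ℝ) * s.choose ℓ ≤ 4 * s.choose (ℓ+1) := by exact_mod_cast hnat
  have hexp : s - ℓ = (s - (ℓ+1)) + 1 := by omega
  rw [hexp, pow_succ, pow_succ]
  have hX : (0:ℝ) ≤ 16^ℓ * 9^(s-(ℓ+1)) := by positivity
  nlinarith [mul_le_mul_of_nonneg_right hcast hX]

lemma pow7_key (s m k d : ℕ) (hd7k : 7*k = 3*s + d) (h8s : 8*s = 14*m + 2*d) :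
    (7:ℝ)^s * 4^m * 3^k ≤ ((14:ℝ) * (54:ℝ) ^ ((1:ℝ)/7))^s := by
  set α : ℝ := (14:ℝ) * (54:ℝ) ^ ((1:ℝ)/7) with hα
  have hαpos : 0 < α := by
    rw [hα]; positivity
  have hα7 : α^7 = 14^7 * 54 := by
    rw [hα, mul_pow]
    congr 1
    rw [← Real.rpow_natCast ((54:ℝ) ^ ((1:ℝ)/7)) 7, ← Real.rpow_mul (by norm_num : (0:ℝ) ≤ 54)]
    norm_num
  apply le_of_pow_le_pow_left₀ (by norm_num : (7:ℕ) ≠ 0) (by positivity)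
  have X7 : ((7:ℝ)^s*4^m*3^k)^7 = 7^(7*s) * 2^(14*m) * (3^(3*s) * 3^d) := by
    calc ((7:ℝ)^s*4^m*3^k)^7 = 7^(s*7)*4^(m*7)*3^(k*7) := by
          rw [mul_pow, mul_pow, ← pow_mul, ← pow_mul, ← pow_mul]
      _ = 7^(7*s) * 2^(14*m) * (3^(3*s) * 3^d) := by
          rw [show s*7 = 7*s by ring, show k*7 = 3*s + d by omega, pow_add,
            show (4:ℝ) = 2^2 by norm_num, ← pow_mul, show 2*(m*7) = 14*m by ring]
  have Y7 : ((α:ℝ)^s)^7 = 7^(7*s) * 2^(14*m) * (2^(2*d) * 3^(3*s)) := by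
    calc ((α:ℝ)^s)^7 = (α^7)^s := by rw [← pow_mul, ← pow_mul, mul_comm s 7]
      _ = ((2:ℝ)^8 * 3^3 * 7^7)^s := by rw [hα7]; norm_num
      _ = 2^(8*s) * 3^(3*s) * 7^(7*s) := by
          rw [mul_pow, mul_pow, ← pow_mul, ← pow_mul, ← pow_mul]
      _ = 7^(7*s) * 2^(14*m) * (2^(2*d) * 3^(3*s)) := by
          rw [show 8*s = 14*m + 2*d from h8s, pow_add]
          ring
  rw [X7, Y7]
  have h34 : (3:ℝ)^d ≤ 2^(2*d) := by
    calc (3:ℝ)^d ≤ 4^d := by gcongr <;> norm_num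
      _ = 2^(2*d) := by rw [show (4:ℝ) = 2^2 by norm_num, ← pow_mul]
  have base : (3:ℝ)^(3*s) * 3^d ≤ 2^(2*d) * 3^(3*s) := by
    rw [mul_comm ((2:ℝ)^(2*d)) _]
    exact mul_le_mul_of_nonneg_left h34 (by positivity)
  exact mul_le_mul_of_nonneg_left base (by positivity)

/-- There is a constant `C > 0` such that for every `s ≥ 1`,
`∑_{ℓ=0}^{⌊4s/7⌋} C(s,ℓ)·16^ℓ·9^{s−ℓ} ≤ C·α₁^s/√s`, where `α₁ = 14·54^{1/7}`. -/
theorem binomial_sum_16_9_bound :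
    ∃ C : ℝ, 0 < C ∧ ∀ s : ℕ, 1 ≤ s →
      (∑ ℓ ∈ Finset.range (4 * s / 7 + 1),
          (Nat.choose s ℓ * 16 ^ ℓ * 9 ^ (s - ℓ) : ℝ)) ≤
        C * (14 * (54 : ℝ) ^ ((1 : ℝ) / 7)) ^ s / Real.sqrt s := by
  refine ⟨8, by norm_num, fun s hs => ?_⟩
  have hrpow1 : (1:ℝ) ≤ (54:ℝ) ^ ((1:ℝ)/7) := by
    have := Real.rpow_le_rpow_of_exponent_le (by norm_num : (1:ℝ) ≤ 54)
      (by norm_num : (0:ℝ) ≤ 1/7)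
    simpa using this
  have hαpos : (0:ℝ) < 14 * (54:ℝ) ^ ((1:ℝ)/7) := by positivity
  by_cases h1 : s = 1
  · subst h1
    simp only [show 4 * 1 / 7 + 1 = 1 by norm_num, Finset.sum_range_one]
    rw [Nat.cast_one, Real.sqrt_one]
    norm_num
    nlinarith
  · have hs2 : 2 ≤ s := by omega
    obtain ⟨m, hmdef⟩ : ∃ m, m = 4*s/7 := ⟨_, rfl⟩
    obtain ⟨k, hkdef⟩ : ∃ k, k = s - m := ⟨_, rfl⟩
    have hm0 : m ≠ 0 := by omega
    have hk0 : k ≠ 0 := by omega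
    have hmk : m + k = s := by omega
    have h4m : m + k ≤ 4*m := by omega
    have h4k : m + k ≤ 4*k := by omega
    have h7 : 4*(m+k) ≤ 7*m + 7 := by omega
    have h7' : 7*m ≤ 4*(m+k) := by omega
    set t : ℕ → ℝ := fun ℓ => (Nat.choose s ℓ * 16 ^ ℓ * 9 ^ (s - ℓ) : ℝ) with ht
    have hgeo : ∑ ℓ ∈ Finset.range (m+1), t ℓ ≤ 4 * t m :=
      geom_dom t m (fun ℓ => by rw [ht]; positivity)
        (fun ℓ hl => ratio_step s ℓ (by omega))
    have hcen := central m k hm0 hk0 h4m h4k h7 h7'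
    rw [hmk] at hcen
    have hc2 : ((m:ℝ)+k) = (s:ℝ) := by exact_mod_cast hmk
    rw [hc2] at hcen
    have hkey := pow7_key s m k (4*s - 7*m) (by omega) (by omega)
    have hsqrtpos : (0:ℝ) < Real.sqrt s := Real.sqrt_pos.mpr (by positivity)
    rw [← hmdef, div_eq_mul_inv]
    have main : (∑ ℓ ∈ Finset.range (m+1), t ℓ) * Real.sqrt s ≤
        8 * (14 * (54:ℝ) ^ ((1:ℝ)/7)) ^ s := by
      have h16 : (16:ℝ)^m = 4^m * 4^m := by rw [← mul_pow]; norm_num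
      have h9 : (9:ℝ)^(s-m) = 3^k * 3^k := by rw [hkdef, ← mul_pow]; norm_num
      calc (∑ ℓ ∈ Finset.range (m+1), t ℓ) * Real.sqrt s ≤ (4 * t m) * Real.sqrt s :=
            mul_le_mul_of_nonneg_right hgeo (Real.sqrt_nonneg _)
        _ = 4 * (((s.choose m : ℝ) * 4^m * 3^k * Real.sqrt s) * (4^m * 3^k)) := by
            rw [ht]; simp only; rw [h16, h9]; ring
        _ ≤ 4 * ((2 * 7^s) * (4^m * 3^k)) := by
            gcongr
        _ = 8 * ((7:ℝ)^s * 4^m * 3^k) := by ring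
        _ ≤ 8 * (14 * (54:ℝ) ^ ((1:ℝ)/7)) ^ s := by linarith
    calc (∑ ℓ ∈ Finset.range (m+1), t ℓ)
        = (∑ ℓ ∈ Finset.range (m+1), t ℓ) * Real.sqrt s * (Real.sqrt s)⁻¹ := by
          field_simp
      _ ≤ 8 * (14 * (54:ℝ) ^ ((1:ℝ)/7)) ^ s * (Real.sqrt s)⁻¹ := by
          gcongr
end

section
/- There exists a constant C > 0 such that for every integer s ≥ 1, Σ_{ℓ=0}^{⌊6s/7⌋} C(s, ℓ) · 12^ℓ ≤ C · α2^s / √s, where α2 = 7 · 2^{6/7} and C(s, ℓ) denotes the binomial coefficient. -/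
open Real Stirling Finset Nat


lemma stirling_antitone : Antitone (fun n => stirlingSeq (n+1)) := by
  intro a b hab
  have h := log_stirlingSeq'_antitone hab
  simp only [Function.comp] at h
  exact (Real.log_le_log_iff (stirlingSeq'_pos _) (stirlingSeq'_pos _)).mp h

lemma stirling_ge_sqrt_pi (n : ℕ) : Real.sqrt π ≤ stirlingSeq (n+1) := by
  refine stirling_antitone.le_of_tendsto ?_ n
  exact tendsto_stirlingSeq_sqrt_pi.comp (Filter.tendsto_add_atTop_nat 1)

lemma stirling_le (n : ℕ) : stirlingSeq (n+1) ≤ Real.exp 1 / Real.sqrt 2 := by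
  simpa [stirlingSeq_one] using stirling_antitone (Nat.zero_le n)

lemma fact_lower (n : ℕ) :
    Real.sqrt π * (Real.sqrt (2*n) * ((n : ℝ)/Real.exp 1)^n) ≤ (n ! : ℝ) := by
  rcases Nat.eq_zero_or_pos n with rfl | hn
  · simp
  obtain ⟨k, rfl⟩ := Nat.exists_eq_add_of_le hn
  have h := stirling_ge_sqrt_pi k
  rw [stirlingSeq] at h
  have hpos : (0:ℝ) < Real.sqrt (2*(1+k)) * (((1+k : ℕ) : ℝ)/Real.exp 1)^(1+k) := by
    positivity
  have := (le_div_iff₀ hpos).mp (by simpa [add_comm] using h)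
  simpa [add_comm] using this

lemma fact_upper (n : ℕ) (hn : 1 ≤ n) :
    (n ! : ℝ) ≤ (Real.exp 1 / Real.sqrt 2) * (Real.sqrt (2*n) * ((n : ℝ)/Real.exp 1)^n) := by
  obtain ⟨k, rfl⟩ := Nat.exists_eq_add_of_le hn
  have h := stirling_le k
  rw [stirlingSeq] at h
  have hpos : (0:ℝ) < Real.sqrt (2*(1+k)) * (((1+k : ℕ) : ℝ)/Real.exp 1)^(1+k) := by
    positivity
  have := (div_le_iff₀ hpos).mp (by simpa [add_comm] using h)
  simpa [add_comm, mul_comm, mul_assoc, mul_left_comm] using this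

lemma choose_le_stirling (s m b : ℕ) (h1 : 1 ≤ m) (h2 : 1 ≤ b) (hmb : m + b = s) :
    (s.choose m : ℝ) ≤ (Real.exp 1/(2*π)) * (Real.sqrt s/(Real.sqrt m * Real.sqrt b)) *
      ((s:ℝ)^s/((m:ℝ)^m * (b:ℝ)^b)) := by
  have hs : 1 ≤ s := by omega
  have hmle : m ≤ s := by omega
  have hfact : (s.choose m : ℝ) * (m ! : ℝ) * (b ! : ℝ) = (s ! : ℝ) := by
    have := Nat.choose_mul_factorial_mul_factorial hmle
    rw [show s - m = b by omega] at this
    exact_mod_cast congrArg (Nat.cast : ℕ → ℝ) this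
  have hLBm := fact_lower m
  have hLBb := fact_lower b
  have hUBs := fact_upper s hs
  have hmpos : (0:ℝ) < m := by exact_mod_cast h1
  have hbpos : (0:ℝ) < b := by exact_mod_cast h2
  have hspos : (0:ℝ) < s := by positivity
  have hLBmpos : (0:ℝ) < Real.sqrt π * (Real.sqrt (2*m) * ((m : ℝ)/Real.exp 1)^m) := by
    positivity
  have hLBbpos : (0:ℝ) < Real.sqrt π * (Real.sqrt (2*b) * ((b : ℝ)/Real.exp 1)^b) := by
    positivity
  have hmf : (0:ℝ) < (m ! : ℝ) := by exact_mod_cast m.factorial_pos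
  have hbf : (0:ℝ) < (b ! : ℝ) := by exact_mod_cast b.factorial_pos
  have key : (s.choose m : ℝ) ≤
      ((Real.exp 1 / Real.sqrt 2) * (Real.sqrt (2*s) * ((s : ℝ)/Real.exp 1)^s)) /
      ((Real.sqrt π * (Real.sqrt (2*m) * ((m : ℝ)/Real.exp 1)^m)) *
       (Real.sqrt π * (Real.sqrt (2*b) * ((b : ℝ)/Real.exp 1)^b))) := by
    have h1' : (s.choose m : ℝ) = (s ! : ℝ) / ((m ! : ℝ) * (b ! : ℝ)) := by
      rw [eq_div_iff (by positivity), ← hfact]; ring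
    rw [h1']
    apply div_le_div₀ (by positivity) hUBs (by positivity)
    exact mul_le_mul hLBm hLBb hLBbpos.le hmf.le
  refine key.trans_eq ?_
  have e1 : Real.sqrt (2*(s:ℝ)) = Real.sqrt 2 * Real.sqrt s := Real.sqrt_mul (by norm_num) _
  have e2 : Real.sqrt (2*(m:ℝ)) = Real.sqrt 2 * Real.sqrt m := Real.sqrt_mul (by norm_num) _
  have e3 : Real.sqrt (2*(b:ℝ)) = Real.sqrt 2 * Real.sqrt b := Real.sqrt_mul (by norm_num) _
  have hexp : Real.exp 1 ^ s = Real.exp 1 ^ m * Real.exp 1 ^ b := by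
    rw [← pow_add, hmb]
  have hpi : (2:ℝ)*π = (Real.sqrt 2 * Real.sqrt 2) * (Real.sqrt π * Real.sqrt π) := by
    rw [Real.mul_self_sqrt (by norm_num), Real.mul_self_sqrt pi_pos.le]
  rw [e1, e2, e3, div_pow, div_pow, div_pow, hpi, hexp]
  have h2ne : Real.sqrt 2 ≠ 0 := by positivity
  have hπne : Real.sqrt π ≠ 0 := by positivity
  have hsm : Real.sqrt (m:ℝ) ≠ 0 := by positivity
  have hsb : Real.sqrt (b:ℝ) ≠ 0 := by positivity
  have hem : Real.exp 1 ^ m ≠ 0 := by positivity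
  have heb : Real.exp 1 ^ b ≠ 0 := by positivity
  have hmm : (m:ℝ)^m ≠ 0 := by positivity
  have hbb : (b:ℝ)^b ≠ 0 := by positivity
  field_simp

lemma gibbs_bound (s m b : ℕ) (h1 : 1 ≤ m) (h2 : 1 ≤ b) (hmb : m + b = s) :
    (s:ℝ)^s * 12^m ≤ (m:ℝ)^m * (b:ℝ)^b * 7^s * 2^m := by
  have hm : (0:ℝ) < m := by exact_mod_cast h1
  have hb : (0:ℝ) < b := by exact_mod_cast h2
  have hs : (0:ℝ) < s := by
    have h' : 1 ≤ s := by omega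
    exact_mod_cast h'
  have hbs : (m:ℝ) + b = s := by exact_mod_cast hmb
  -- Gibbs pieces
  have hA : (m:ℝ) * Real.log ((6*s)/(7*m)) ≤ 6*s/7 - m := by
    have hx : (0:ℝ) < (6*s)/(7*m) := by positivity
    have h := Real.log_le_sub_one_of_pos hx
    have e : (m:ℝ) * ((6*s)/(7*m) - 1) = 6*s/7 - m := by field_simp
    nlinarith [mul_le_mul_of_nonneg_left h hm.le]
  have hB : (b:ℝ) * Real.log ((s:ℝ)/(7*b)) ≤ s/7 - b := by
    have hx : (0:ℝ) < (s:ℝ)/(7*b) := by positivity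
    have h := Real.log_le_sub_one_of_pos hx
    have e : (b:ℝ) * ((s:ℝ)/(7*b) - 1) = s/7 - b := by field_simp
    nlinarith [mul_le_mul_of_nonneg_left h hb.le]
  have eA : Real.log ((6*s)/(7*m)) =
      Real.log 6 + Real.log s - (Real.log 7 + Real.log m) := by
    rw [Real.log_div (by positivity) (by positivity), Real.log_mul (by norm_num) hs.ne',
        Real.log_mul (by norm_num) hm.ne']
  have eB : Real.log ((s:ℝ)/(7*b)) = Real.log s - (Real.log 7 + Real.log b) := by
    rw [Real.log_div hs.ne' (by positivity), Real.log_mul (by norm_num) hb.ne']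
  rw [eA] at hA
  rw [eB] at hB
  have h12 : Real.log 12 = Real.log 6 + Real.log 2 := by
    rw [← Real.log_mul (by norm_num) (by norm_num)]; norm_num
  -- log inequality
  have hlog : Real.log ((s:ℝ)^s * 12^m) ≤ Real.log ((m:ℝ)^m * (b:ℝ)^b * 7^s * 2^m) := by
    rw [Real.log_mul (by positivity) (by positivity),
        Real.log_mul (by positivity) (by positivity),
        Real.log_mul (by positivity) (by positivity),
        Real.log_mul (by positivity) (by positivity),
        Real.log_pow, Real.log_pow, Real.log_pow, Real.log_pow, Real.log_pow,
        Real.log_pow, h12]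
    have hsLs : (s:ℝ)*Real.log s = m*Real.log s + b*Real.log s := by rw [← hbs]; ring
    have hsL7 : (s:ℝ)*Real.log 7 = m*Real.log 7 + b*Real.log 7 := by rw [← hbs]; ring
    ring_nf at hA hB hsLs hsL7 ⊢
    linarith [hA, hB, hsLs, hsL7, hbs]
  exact (Real.log_le_log_iff (by positivity) (by positivity)).mp hlog

lemma geom_step (s m ℓ : ℕ) (hm : 7 * m ≤ 6 * s) (hl : ℓ + 1 ≤ m) :
    2 * ((s.choose ℓ : ℝ) * 12^ℓ) ≤ (s.choose (ℓ+1) : ℝ) * 12^(ℓ+1) := by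
  have hnat : 2 * (s.choose ℓ * 12^ℓ) * (ℓ+1) ≤ s.choose (ℓ+1) * 12^(ℓ+1) * (ℓ+1) := by
    have hre : s.choose (ℓ+1) * (ℓ+1) = s.choose ℓ * (s - ℓ) := Nat.choose_succ_right_eq s ℓ
    calc 2 * (s.choose ℓ * 12^ℓ) * (ℓ+1) = s.choose ℓ * 12^ℓ * (2*(ℓ+1)) := by ring
      _ ≤ s.choose ℓ * 12^ℓ * (12*(s-ℓ)) := by
          apply Nat.mul_le_mul_left
          omega
      _ = (s.choose ℓ * (s-ℓ)) * 12^(ℓ+1) := by ring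
      _ = s.choose (ℓ+1) * 12^(ℓ+1) * (ℓ+1) := by rw [← hre]; ring
  have := Nat.le_of_mul_le_mul_right hnat (by omega)
  exact_mod_cast this

lemma geom_decay (s m : ℕ) (hm : 7 * m ≤ 6 * s) :
    ∀ j, j ≤ m → ((s.choose (m-j) : ℝ) * 12^(m-j)) ≤ ((s.choose m : ℝ) * 12^m) * (1/2)^j := by
  intro j
  induction j with
  | zero => intro _; simp
  | succ j ih =>
    intro hj
    have hj' : j ≤ m := by omega
    have h1 := ih hj'
    have h2 := geom_step s m (m - (j+1)) hm (by omega)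
    rw [show m - (j+1) + 1 = m - j by omega] at h2
    have h2pos : (0:ℝ) < (1/2:ℝ)^j := by positivity
    calc ((s.choose (m-(j+1)) : ℝ) * 12^(m-(j+1))) ≤ ((s.choose (m-j) : ℝ) * 12^(m-j)) / 2 := by
          linarith
      _ ≤ ((s.choose m : ℝ) * 12^m) * (1/2)^j / 2 := by
          apply div_le_div_of_nonneg_right h1 (by norm_num) |>.trans_eq rfl
      _ = ((s.choose m : ℝ) * 12^m) * (1/2)^(j+1) := by ring

lemma sum_le_two_mul (s m : ℕ) (hm : 7 * m ≤ 6 * s) :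
    (∑ ℓ ∈ Finset.range (m+1), ((s.choose ℓ : ℝ) * 12^ℓ)) ≤
      2 * ((s.choose m : ℝ) * 12^m) := by
  have h := Finset.sum_range_reflect (fun ℓ => ((s.choose ℓ : ℝ) * 12^ℓ)) (m+1)
  rw [← h]
  have hb : ∀ j ∈ Finset.range (m+1),
      ((s.choose (m + 1 - 1 - j) : ℝ) * 12^(m + 1 - 1 - j)) ≤
        ((s.choose m : ℝ) * 12^m) * (1/2)^j := by
    intro j hj
    simp only [Nat.add_sub_cancel]
    exact geom_decay s m hm j (by simpa using Finset.mem_range.mp hj |> Nat.lt_succ_iff.mp)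
  calc (∑ j ∈ Finset.range (m+1), ((s.choose (m + 1 - 1 - j) : ℝ) * 12^(m + 1 - 1 - j)))
      ≤ ∑ j ∈ Finset.range (m+1), ((s.choose m : ℝ) * 12^m) * (1/2)^j :=
        Finset.sum_le_sum hb
    _ = ((s.choose m : ℝ) * 12^m) * ∑ j ∈ Finset.range (m+1), (1/2:ℝ)^j := by
        rw [Finset.mul_sum]
    _ ≤ ((s.choose m : ℝ) * 12^m) * 2 := by
        apply mul_le_mul_of_nonneg_left _ (by positivity)
        simpa using sum_geometric_two_le (m+1)
    _ = 2 * ((s.choose m : ℝ) * 12^m) := by ring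

/-- There is a constant `C > 0` such that for every `s ≥ 1`,
`∑_{ℓ=0}^{⌊6s/7⌋} C(s,ℓ)·12^ℓ ≤ C·α₂^s/√s`, where `α₂ = 7·2^{6/7}`. -/
theorem binomial_sum_12_bound :
    ∃ C : ℝ, 0 < C ∧ ∀ s : ℕ, 1 ≤ s →
      (∑ ℓ ∈ Finset.range (6 * s / 7 + 1),
          (Nat.choose s ℓ * 12 ^ ℓ : ℝ)) ≤
        C * (7 * (2 : ℝ) ^ ((6 : ℝ) / 7)) ^ s / Real.sqrt s := by
  refine ⟨4, by norm_num, ?_⟩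
  intro s hs
  set α : ℝ := 7 * (2 : ℝ) ^ ((6 : ℝ) / 7) with hα
  have hα2 : (1:ℝ) ≤ (2 : ℝ) ^ ((6 : ℝ) / 7) := by
    apply Real.one_le_rpow (by norm_num) (by norm_num)
  have hαpos : (0:ℝ) < α := by rw [hα]; positivity
  rcases eq_or_lt_of_le hs with h1 | h2
  · -- s = 1
    rw [← h1]
    norm_num
    nlinarith [hα2]
  -- s ≥ 2
  have hs2 : 2 ≤ s := h2
  set m := 6 * s / 7 with hmdef
  set b := s - m with hbdef
  have hm1 : 1 ≤ m := by omega
  have hb1 : 1 ≤ b := by omega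
  have hmb : m + b = s := by omega
  have h7m : 7 * m ≤ 6 * s := by omega
  have h2m : s ≤ 2 * m := by omega
  have h7b : s ≤ 7 * b := by omega
  have hspos : (0:ℝ) < s := by positivity
  have hsq : (0:ℝ) < Real.sqrt s := Real.sqrt_pos.mpr hspos
  -- sqrt bound : sqrt s / (sqrt m * sqrt b) ≤ sqrt 14 / sqrt s
  have hsqrt : Real.sqrt s / (Real.sqrt m * Real.sqrt b) ≤ Real.sqrt 14 / Real.sqrt s := by
    have hmbge : (s:ℝ)^2 ≤ 14 * (m * b) := by
      have : s * s ≤ 14 * (m * b) := by nlinarith [h2m, h7b]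
      have := (Nat.cast_le (α := ℝ)).mpr this
      push_cast at this
      nlinarith [this]
    have h14 : (s:ℝ) ≤ Real.sqrt 14 * (Real.sqrt m * Real.sqrt b) := by
      have := Real.sqrt_le_sqrt hmbge
      rwa [Real.sqrt_sq hspos.le, Real.sqrt_mul (by norm_num), Real.sqrt_mul (by positivity)]
        at this
    rw [div_le_div_iff₀ (by positivity) hsq]
    calc Real.sqrt s * Real.sqrt s = (s:ℝ) := Real.mul_self_sqrt hspos.le
      _ ≤ Real.sqrt 14 * (Real.sqrt m * Real.sqrt b) := h14
      _ = Real.sqrt 14 * (Real.sqrt m * Real.sqrt b) := rfl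
  -- power bound : s^s/(m^m b^b) * 12^m ≤ 7^s * 2^m
  have hmm : (0:ℝ) < (m:ℝ)^m * (b:ℝ)^b := by
    have : (0:ℝ) < (m:ℝ) := by exact_mod_cast hm1
    have : (0:ℝ) < (b:ℝ) := by exact_mod_cast hb1
    positivity
  have hpow : (s:ℝ)^s/((m:ℝ)^m * (b:ℝ)^b) * 12^m ≤ 7^s * 2^m := by
    rw [div_mul_eq_mul_div, div_le_iff₀ hmm]
    calc (s:ℝ)^s * 12^m ≤ (m:ℝ)^m * (b:ℝ)^b * 7^s * 2^m := gibbs_bound s m b hm1 hb1 hmb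
      _ = 7^s * 2^m * ((m:ℝ)^m * (b:ℝ)^b) := by ring
  -- 2^m ≤ 2^(6s/7) as rpow and α^s
  have hαs : (7:ℝ)^s * 2^m ≤ α^s := by
    have hle : (m:ℝ) ≤ (6:ℝ)/7 * s := by
      have : (7:ℝ) * m ≤ 6 * s := by exact_mod_cast h7m
      linarith
    have hr : (2:ℝ)^m ≤ (2:ℝ)^((6:ℝ)/7 * s) := by
      rw [← Real.rpow_natCast 2 m]
      exact Real.rpow_le_rpow_of_exponent_le (by norm_num) hle
    calc (7:ℝ)^s * 2^m ≤ 7^s * (2:ℝ)^((6:ℝ)/7 * s) := by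
          apply mul_le_mul_of_nonneg_left hr (by positivity)
      _ = α^s := by
          rw [hα, mul_pow, ← Real.rpow_natCast ((2:ℝ)^((6:ℝ)/7)) s,
            ← Real.rpow_mul (by norm_num)]
  -- numeric : exp 1 * sqrt 14 / π ≤ 4
  have hnum : Real.exp 1 * Real.sqrt 14 ≤ 4 * π := by
    have he : Real.exp 1 < 2.7182818286 := Real.exp_one_lt_d9
    have h14 : Real.sqrt 14 ≤ 3.75 := by
      rw [show (3.75:ℝ) = Real.sqrt (3.75^2) by rw [Real.sqrt_sq]; norm_num]
      apply Real.sqrt_le_sqrt; norm_num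
    have hπ : (3.14:ℝ) ≤ π := by linarith [Real.pi_gt_d6]
    nlinarith [Real.sqrt_nonneg (14:ℝ), Real.exp_pos 1]
  -- main chain
  have hTm : (s.choose m : ℝ) * 12^m ≤
      (Real.exp 1/(2*π)) * (Real.sqrt 14/Real.sqrt s) * (α^s) := by
    have h1 := choose_le_stirling s m b hm1 hb1 hmb
    have h12pos : (0:ℝ) < (12:ℝ)^m := by positivity
    calc (s.choose m : ℝ) * 12^m
        ≤ ((Real.exp 1/(2*π)) * (Real.sqrt s/(Real.sqrt m * Real.sqrt b)) *
            ((s:ℝ)^s/((m:ℝ)^m * (b:ℝ)^b))) * 12^m := by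
          apply mul_le_mul_of_nonneg_right h1 h12pos.le
      _ = (Real.exp 1/(2*π)) * (Real.sqrt s/(Real.sqrt m * Real.sqrt b)) *
            ((s:ℝ)^s/((m:ℝ)^m * (b:ℝ)^b) * 12^m) := by ring
      _ ≤ (Real.exp 1/(2*π)) * (Real.sqrt 14/Real.sqrt s) * (7^s * 2^m) := by
          have hc1 : (0:ℝ) ≤ Real.exp 1/(2*π) := by positivity
          have hc2 : (0:ℝ) ≤ Real.sqrt s/(Real.sqrt m * Real.sqrt b) := by positivity
          have hc3 : (0:ℝ) ≤ (s:ℝ)^s/((m:ℝ)^m * (b:ℝ)^b) * 12^m := by positivity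
          apply mul_le_mul (mul_le_mul le_rfl hsqrt hc2 hc1) hpow hc3 (by positivity)
      _ ≤ (Real.exp 1/(2*π)) * (Real.sqrt 14/Real.sqrt s) * (α^s) := by
          apply mul_le_mul_of_nonneg_left hαs (by positivity)
  calc (∑ ℓ ∈ Finset.range (m+1), ((s.choose ℓ : ℝ) * 12^ℓ))
      ≤ 2 * ((s.choose m : ℝ) * 12^m) := sum_le_two_mul s m h7m
    _ ≤ 2 * ((Real.exp 1/(2*π)) * (Real.sqrt 14/Real.sqrt s) * (α^s)) := by
        apply mul_le_mul_of_nonneg_left hTm (by norm_num)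
    _ = (Real.exp 1 * Real.sqrt 14 / π) * α^s / Real.sqrt s := by
        field_simp
    _ ≤ 4 * α^s / Real.sqrt s := by
        have h4 : Real.exp 1 * Real.sqrt 14 / π ≤ 4 := by
          rw [div_le_iff₀ pi_pos]
          linarith
        gcongr
end
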